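/- Let Σ = {p ∈ ℤ[t,t⁻¹] : p(1) = ±1}. If f : M → N is a morphism of finitely generated free ℤ[t,t⁻¹]-modules such that the induced map ℤ ⊗_{ℤ[t,t⁻¹]} M → ℤ ⊗_{ℤ[t,t⁻¹]} N (via the augmentation t ↦ 1) is an isomorphism, then Σ⁻¹f : Σ⁻¹M → Σ⁻¹N is an isomorphism. -/

import Mathlib

/-- The augmentation `ε : ℤ[t,t⁻¹] → ℤ`, i.e. evaluation at `t = 1`. -/
noncomputable def laurentAug : LaurentPolynomial ℤ →+* ℤ :=
  AddMonoidAlgebra.liftNCRingHom (RingHom.id ℤ) 1 fun _ _ => Commute.all _ _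

/-- The multiplicative set `Σ ⊆ ℤ[t,t⁻¹]` of Laurent polynomials `p` with `p(1) = ±1`. -/
noncomputable def augSubmonoid : Submonoid (LaurentPolynomial ℤ) where
  carrier := {p | laurentAug p = 1 ∨ laurentAug p = -1}
  one_mem' := Or.inl (map_one laurentAug)
  mul_mem' := by
    rintro a b (ha | ha) (hb | hb) <;> simp_all [Set.mem_setOf_eq, map_mul]

/-- `ℤ` as an algebra over `ℤ[t,t⁻¹]` via the augmentation. -/
noncomputable instance : Algebra (LaurentPolynomial ℤ) ℤ := laurentAug.toAlgebra

open TensorProduct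

section Aux
variable {R S M N ι : Type*} [CommRing R]
  [AddCommGroup M] [Module R M] [AddCommGroup N] [Module R N]
  [Fintype ι] [DecidableEq ι]

lemma toMatrix_baseChange [CommRing S] [Algebra R S] (b : Module.Basis ι R M) (c : Module.Basis ι R N) (f : M →ₗ[R] N) :
    LinearMap.toMatrix (b.baseChange S) (c.baseChange S) (LinearMap.baseChange S f)
      = (LinearMap.toMatrix b c f).map (algebraMap R S) := by
  ext i j
  simp [LinearMap.toMatrix_apply, Module.Basis.baseChange_apply, LinearMap.baseChange_tmul,
    Module.Basis.baseChange_repr_tmul, Algebra.smul_def, Matrix.map_apply]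

lemma bijective_of_isUnit_det (b : Module.Basis ι R M) (c : Module.Basis ι R N) (f : M →ₗ[R] N)
    (hdet : IsUnit (LinearMap.toMatrix b c f).det) : Function.Bijective f := by
  set A := LinearMap.toMatrix b c f with hA
  have hf : f = Matrix.toLin b c A := by rw [hA, Matrix.toLin_toMatrix]
  have h1 : (Matrix.toLin c b A⁻¹).comp f = LinearMap.id := by
    rw [hf, ← Matrix.toLin_mul, Matrix.nonsing_inv_mul A hdet, Matrix.toLin_one]
  have h2 : f.comp (Matrix.toLin c b A⁻¹) = LinearMap.id := by
    rw [hf, ← Matrix.toLin_mul, Matrix.mul_nonsing_inv A hdet, Matrix.toLin_one]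
  exact Function.bijective_iff_has_inverse.2 ⟨Matrix.toLin c b A⁻¹,
    fun x => LinearMap.congr_fun h1 x, fun x => LinearMap.congr_fun h2 x⟩

end Aux


/-- If `f : M → N` is a morphism of finitely generated free `ℤ[t,t⁻¹]`-modules whose base change
along the augmentation `ℤ ⊗ M → ℤ ⊗ N` is an isomorphism, then the localized map
`Σ⁻¹M → Σ⁻¹N` is an isomorphism. -/
theorem stmt7 {M N : Type} [AddCommGroup M] [AddCommGroup N]
    [Module (LaurentPolynomial ℤ) M] [Module (LaurentPolynomial ℤ) N]
    [Module.Free (LaurentPolynomial ℤ) M] [Module.Free (LaurentPolynomial ℤ) N]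
    [Module.Finite (LaurentPolynomial ℤ) M] [Module.Finite (LaurentPolynomial ℤ) N]
    (f : M →ₗ[LaurentPolynomial ℤ] N)
    (h : Function.Bijective (LinearMap.baseChange ℤ f)) :
    Function.Bijective (LinearMap.baseChange (Localization augSubmonoid) f) := by
  classical
  let b := Module.Free.chooseBasis (LaurentPolynomial ℤ) M
  let c := Module.Free.chooseBasis (LaurentPolynomial ℤ) N
  let eZ : (ℤ ⊗[(LaurentPolynomial ℤ)] M) ≃ₗ[ℤ] (ℤ ⊗[(LaurentPolynomial ℤ)] N) := LinearEquiv.ofBijective _ h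
  let e := Module.Basis.indexEquiv ((b.baseChange ℤ).map eZ) (c.baseChange ℤ)
  let c' := c.reindex e.symm
  have hZdet : IsUnit (LinearMap.toMatrix (b.baseChange ℤ) (c'.baseChange ℤ)
      (LinearMap.baseChange ℤ f)).det := eZ.isUnit_det _ _
  rw [toMatrix_baseChange b c' f, ← RingHom.mapMatrix_apply, ← RingHom.map_det] at hZdet
  have hmem : (LinearMap.toMatrix b c' f).det ∈ augSubmonoid := by
    have halg : (algebraMap (LaurentPolynomial ℤ) ℤ) = laurentAug := rfl
    rw [halg] at hZdet
    exact Int.isUnit_iff.1 hZdet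
  have hSdet : IsUnit (LinearMap.toMatrix (b.baseChange (Localization augSubmonoid)) (c'.baseChange (Localization augSubmonoid))
      (LinearMap.baseChange (Localization augSubmonoid) f)).det := by
    rw [toMatrix_baseChange b c' f, ← RingHom.mapMatrix_apply, ← RingHom.map_det]
    exact IsLocalization.map_units (Localization augSubmonoid) ⟨_, hmem⟩
  exact @bijective_of_isUnit_det (Localization augSubmonoid)
    ((Localization augSubmonoid) ⊗[LaurentPolynomial ℤ] M)
    ((Localization augSubmonoid) ⊗[LaurentPolynomial ℤ] N)
    (Module.Free.ChooseBasisIndex (LaurentPolynomial ℤ) M)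
    inferInstance inferInstance inferInstance inferInstance inferInstance inferInstance inferInstance
    (b.baseChange (Localization augSubmonoid)) (c'.baseChange (Localization augSubmonoid))
    (LinearMap.baseChange (Localization augSubmonoid) f) hSdet
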